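/- For every finite abelian group G of order n+1, the group Aut(L(G)) ∩ S_n is isomorphic to Aut(G), where S_n acts on L(G) by permuting the first n coordinates (and fixing the last coordinate as the negative sum). -/

import Mathlib

def latticePermGroup (n : ℕ) (G : Type*) [AddCommGroup G] (g : Fin n → G) :
    Subgroup (Equiv.Perm (Fin n)) where
  carrier := {σ | ∀ x : Fin n → ℤ,
    (∑ i, x i • g i = 0) ↔ (∑ i, x (σ i) • g i = 0)}
  one_mem' := by intro x; simp
  mul_mem' := by
    intro σ τ hσ hτ x
    have h1 := hσ x
    have h2 := hτ (fun i => x (σ i))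
    simpa [Equiv.Perm.mul_apply] using h1.trans h2
  inv_mem' := by
    intro σ hσ x
    have h := hσ (fun i => x (σ⁻¹ i))
    simpa [Equiv.Perm.inv_def] using h.symm

section Aux
set_option linter.unusedSectionVars false
variable {n : ℕ} {G : Type*} [AddCommGroup G] [Fintype G] {g : Fin n → G}

private lemma sum_three (h : Fin n → G) (i j k : Fin n) :
    (∑ m, (((if m = i then (1:ℤ) else 0) + (if m = j then 1 else 0)
      - (if m = k then 1 else 0)) • h m)) = h i + h j - h k := by
  simp [add_smul, sub_smul, ite_smul, Finset.sum_add_distrib, Finset.sum_sub_distrib]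

private lemma sum_two (h : Fin n → G) (i j : Fin n) :
    (∑ m, (((if m = i then (1:ℤ) else 0) + (if m = j then 1 else 0)) • h m))
      = h i + h j := by
  simp [add_smul, ite_smul, Finset.sum_add_distrib]

private lemma key {σ : Equiv.Perm (Fin n)} (hσ : σ ∈ latticePermGroup n G g)
    (c : Fin n → ℤ) :
    (∑ i, c i • g i = 0) ↔ (∑ i, c i • g (σ i) = 0) := by
  have h : (∑ m, c (σ.symm m) • g m = 0) ↔ (∑ i, (fun m => c (σ.symm m)) (σ i) • g i = 0) :=
    hσ (fun m => c (σ.symm m))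
  simp only [Equiv.symm_apply_apply] at h
  have e1 : (∑ m, c (σ.symm m) • g m) = ∑ i, c i • g (σ i) := by
    rw [← Equiv.sum_comp σ (fun m => c (σ.symm m) • g m)]
    simp
  rw [e1] at h
  exact h.symm

private lemma rel3 {σ : Equiv.Perm (Fin n)} (hσ : σ ∈ latticePermGroup n G g)
    {i j k : Fin n} (h : g i + g j = g k) : g (σ i) + g (σ j) = g (σ k) := by
  have hk := (key hσ (fun m => (if m = i then (1:ℤ) else 0) + (if m = j then 1 else 0)
    - (if m = k then 1 else 0)))
  rw [sum_three g i j k, sum_three (fun m => g (σ m)) i j k] at hk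
  have h2 : g (σ i) + g (σ j) - g (σ k) = 0 := hk.mp (by rw [h]; abel)
  exact sub_eq_zero.mp h2

private lemma rel2 {σ : Equiv.Perm (Fin n)} (hσ : σ ∈ latticePermGroup n G g)
    {i j : Fin n} (h : g i + g j = 0) : g (σ i) + g (σ j) = 0 := by
  have hk := (key hσ (fun m => (if m = i then (1:ℤ) else 0) + (if m = j then 1 else 0)))
  rw [sum_two g i j, sum_two (fun m => g (σ m)) i j] at hk
  exact hk.mp h

end Aux

theorem aut_lattice_cap_perms_iso_aut (n : ℕ) (G : Type*) [AddCommGroup G] [Fintype G]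
    (g : Fin n → G) (hinj : Function.Injective g) (h0 : ∀ i, g i ≠ 0)
    (hcard : Fintype.card G = n + 1) :
    Nonempty ((latticePermGroup n G g) ≃* Multiplicative (AddAut G)) := by
  classical
  letI : Group (AddAut G) := inferInstanceAs (Group (Multiplicative (AddAut G)))
  have hmul : ∀ (φ ψ : AddAut G) (x : G), (φ * ψ) x = φ (ψ x) := fun _ _ _ => rfl
  have hinv : ∀ (φ : AddAut G) (x : G), φ (φ⁻¹ x) = x := fun φ x => φ.apply_symm_apply x
  -- the equivalence between indices and nonzero elements
  have hbij : Function.Bijective (fun i => (⟨g i, h0 i⟩ : {a : G // a ≠ 0})) := by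
    rw [Fintype.bijective_iff_injective_and_card]
    constructor
    · intro a b hab
      exact hinj (congrArg Subtype.val hab)
    · have h1 : Fintype.card {a : G // ¬ a = 0} = Fintype.card G - Fintype.card {a : G // a = 0} :=
        Fintype.card_subtype_compl _
      have h2 : Fintype.card {a : G // a = 0} = 1 := Fintype.card_subtype_eq 0
      simp only [Fintype.card_fin]
      show n = Fintype.card {a : G // ¬ a = 0}
      rw [h1, h2, hcard]
      omega
  set e : Fin n ≃ {a : G // a ≠ 0} := Equiv.ofBijective _ hbij with he
  have heval : ∀ i, ((e i : G)) = g i := fun i => rfl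
  have hesymm : ∀ (a : {a : G // a ≠ 0}), g (e.symm a) = a := by
    intro a; rw [← heval, Equiv.apply_symm_apply]
  -- the restriction of an automorphism to nonzero elements
  have hker : ∀ (φ : AddAut G) (a : G), a ≠ 0 ↔ φ a ≠ 0 := by
    intro φ a
    constructor
    · intro ha h
      exact ha (by simpa using (EmbeddingLike.map_eq_zero_iff (f := (φ : G ≃+ G))).mp h)
    · intro h ha
      exact h (by rw [ha]; exact map_zero φ)
  let restr : AddAut G → ({a : G // a ≠ 0} ≃ {a : G // a ≠ 0}) :=
    fun φ => Equiv.subtypeEquiv φ.toEquiv (hker φ)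
  -- the homomorphism Ψ
  let Ψ : AddAut G →* Equiv.Perm (Fin n) :=
    MonoidHom.mk' (fun φ => (e.trans (restr φ)).trans e.symm) (by
      intro φ ψ
      ext i
      simp [restr, Equiv.Perm.mul_apply, hmul])
  have hΨval : ∀ (φ : AddAut G) (i : Fin n), g (Ψ φ i) = φ (g i) := by
    intro φ i
    show g (e.symm (restr φ (e i))) = φ (g i)
    rw [hesymm]
    simp [restr, heval]
  -- Ψ is injective
  have hΨinj : Function.Injective Ψ := by
    intro φ ψ h
    apply AddEquiv.ext
    intro a
    by_cases ha : a = 0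
    · rw [ha, map_zero, map_zero]
    · have : a = g (e.symm ⟨a, ha⟩) := (hesymm ⟨a, ha⟩).symm
      rw [this, ← hΨval φ, ← hΨval ψ, h]
  -- range of Ψ equals the lattice permutation group
  have hrange : Ψ.range = latticePermGroup n G g := by
    ext σ
    constructor
    · rintro ⟨φ, rfl⟩
      intro x
      have hsum : (∑ i, x ((Ψ φ) i) • g i) = (φ⁻¹ : AddAut G) (∑ j, x j • g j) := by
        rw [← Equiv.sum_comp (Ψ φ).symm (fun i => x ((Ψ φ) i) • g i)]
        rw [map_sum]
        refine Finset.sum_congr rfl (fun j _ => ?_)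
        have h1 : (Ψ φ) ((Ψ φ).symm j) = j := Equiv.apply_symm_apply _ _
        rw [h1]
        have h2 : g ((Ψ φ).symm j) = (φ⁻¹ : AddAut G) (g j) := by
          have : (Ψ φ).symm = Ψ φ⁻¹ := (map_inv Ψ φ).symm
          rw [this, hΨval]
        rw [h2, map_zsmul]
      rw [hsum]
      constructor
      · intro h; rw [h, map_zero]
      · intro h
        have := congrArg (φ : AddAut G) h
        simpa [hinv] using this
    · intro hσ
      -- build the automorphism from σ
      set f : G → G := fun a => if h : a = 0 then 0 else g (σ (e.symm ⟨a, h⟩)) with hf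
      have hfval : ∀ (i : Fin n), f (g i) = g (σ i) := by
        intro i
        rw [hf]
        simp only [dif_neg (h0 i)]
        congr 1
        have : (⟨g i, h0 i⟩ : {a : G // a ≠ 0}) = e i := rfl
        rw [this, Equiv.symm_apply_apply]
      have hf0 : f 0 = 0 := by simp [hf]
      have hfne : ∀ a, a ≠ 0 → f a ≠ 0 := by
        intro a ha
        rw [hf]; simp only [dif_neg ha]
        exact h0 _
      have hadd : ∀ a b : G, f (a + b) = f a + f b := by
        intro a b
        by_cases ha : a = 0
        · rw [ha, hf0, zero_add, zero_add]
        by_cases hb : b = 0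
        · rw [hb, hf0, add_zero, add_zero]
        have hga : g (e.symm ⟨a, ha⟩) = a := hesymm _
        have hgb : g (e.symm ⟨b, hb⟩) = b := hesymm _
        by_cases hab : a + b = 0
        · -- f a + f b = 0
          have hr : g (e.symm ⟨a, ha⟩) + g (e.symm ⟨b, hb⟩) = 0 := by
            rw [hga, hgb]; exact hab
          have := rel2 hσ hr
          rw [hab, hf0]
          have hfa : f a = g (σ (e.symm ⟨a, ha⟩)) := by rw [hf]; simp only [dif_neg ha]
          have hfb : f b = g (σ (e.symm ⟨b, hb⟩)) := by rw [hf]; simp only [dif_neg hb]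
          rw [hfa, hfb, this]
        · have hgab : g (e.symm ⟨a + b, hab⟩) = a + b := hesymm _
          have hr : g (e.symm ⟨a, ha⟩) + g (e.symm ⟨b, hb⟩) = g (e.symm ⟨a + b, hab⟩) := by
            rw [hga, hgb, hgab]
          have := rel3 hσ hr
          have hfa : f a = g (σ (e.symm ⟨a, ha⟩)) := by rw [hf]; simp only [dif_neg ha]
          have hfb : f b = g (σ (e.symm ⟨b, hb⟩)) := by rw [hf]; simp only [dif_neg hb]
          have hfab : f (a + b) = g (σ (e.symm ⟨a + b, hab⟩)) := by
            rw [hf]; simp only [dif_neg hab]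
          rw [hfa, hfb, hfab, this]
      have hfinj : Function.Injective f := by
        intro a b hfab
        by_cases ha : a = 0 <;> by_cases hb : b = 0
        · rw [ha, hb]
        · exact absurd (hfab.symm.trans (by rw [ha, hf0])) (hfne b hb)
        · exact absurd (hfab.trans (by rw [hb, hf0])) (hfne a ha)
        · rw [hf] at hfab
          simp only [dif_neg ha, dif_neg hb] at hfab
          have := e.symm.injective (σ.injective (hinj hfab))
          exact congrArg Subtype.val (by exact_mod_cast this)
      have hfbij : Function.Bijective f := Finite.injective_iff_bijective.mp hfinj
      let φ : AddAut G := AddEquiv.ofBijective (AddMonoidHom.mk' f hadd) hfbij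
      have hφval : ∀ a, φ a = f a := fun a => rfl
      refine ⟨φ, ?_⟩
      apply Equiv.ext
      intro i
      show e.symm (restr φ (e i)) = σ i
      have : (restr φ (e i) : G) = g (σ i) := by
        show φ (e i : G) = g (σ i)
        rw [hφval, heval, hfval]
      have h2 : restr φ (e i) = e (σ i) := Subtype.ext (by rw [this, heval])
      rw [h2, Equiv.symm_apply_apply]
  exact ⟨(MulEquiv.subgroupCongr hrange.symm).trans
    ((MonoidHom.ofInjective hΨinj).symm)⟩
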